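/- One step of adaptive cross approximation preserves exactness on previously selected crosses and zeroes out the new pivot: let A = M − M(:,J)M(I,J)^{-1}M(I,:) be the residual after selecting index sets I, J (with M(I,J) invertible), let (i*, j*) be any pair with A_{i*,j*} ≠ 0, and set I' = I ∪ {i*}, J' = J ∪ {j*}. Then M(I',J') is invertible, and the new residual A' = M − M(:,J')M(I',J')^{-1}M(I',:) vanishes on all rows in I' and all columns in J'. -/

import Mathlib

open Matrix


lemma residual_vanishes {n m r : ℕ} (M : Matrix (Fin n) (Fin m) ℝ)
    (I : Fin r → Fin n) (J : Fin r → Fin m) (h : IsUnit (M.submatrix I J)) :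
    (∀ (a : Fin r) (j : Fin m),
      (M - M.submatrix id J * (M.submatrix I J)⁻¹ * M.submatrix I id) (I a) j = 0) ∧
    (∀ (i : Fin n) (b : Fin r),
      (M - M.submatrix id J * (M.submatrix I J)⁻¹ * M.submatrix I id) i (J b) = 0) := by
  set B := M.submatrix I J with hB
  have hdet : IsUnit B.det := (Matrix.isUnit_iff_isUnit_det B).1 h
  have h1 : B * B⁻¹ = 1 := Matrix.mul_nonsing_inv B hdet
  have h2 : B⁻¹ * B = 1 := Matrix.nonsing_inv_mul B hdet
  constructor
  · intro a j
    have key : ∀ c, (M.submatrix id J * B⁻¹) (I a) c = (1 : Matrix (Fin r) (Fin r) ℝ) a c := by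
      intro c
      rw [← h1]
      simp [Matrix.mul_apply, hB]
    simp only [Matrix.sub_apply, Matrix.mul_apply]
    have : ∀ c, (∑ b, M.submatrix id J (I a) b * B⁻¹ b c) = (1 : Matrix (Fin r) (Fin r) ℝ) a c := by
      intro c
      have := key c
      simpa [Matrix.mul_apply] using this
    rw [Finset.sum_congr rfl fun c _ => by rw [this c]]
    simp [Matrix.one_apply]
  · intro i b
    have key : ∀ k, (B⁻¹ * M.submatrix I id) k (J b) = (1 : Matrix (Fin r) (Fin r) ℝ) k b := by
      intro k
      rw [← h2]
      simp [Matrix.mul_apply, hB]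
    simp only [Matrix.sub_apply, Matrix.mul_apply]
    have hsum : ∑ c, (∑ k, M.submatrix id J i k * B⁻¹ k c) * M.submatrix I id c (J b)
        = ∑ k, M.submatrix id J i k * ((B⁻¹ * M.submatrix I id) k (J b)) := by
      simp only [Matrix.mul_apply, Finset.sum_mul, Finset.mul_sum]
      rw [Finset.sum_comm]
      simp [mul_assoc]
    rw [hsum]
    simp only [key]
    simp [Matrix.one_apply]


lemma enlarged_isUnit {n m r : ℕ} (M : Matrix (Fin n) (Fin m) ℝ)
    (I : Fin r → Fin n) (J : Fin r → Fin m)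
    (hinv : IsUnit (M.submatrix I J))
    (istar : Fin n) (jstar : Fin m)
    (hpivot :
      (M - M.submatrix id J * (M.submatrix I J)⁻¹ * M.submatrix I id) istar jstar ≠ 0) :
    IsUnit (M.submatrix (Fin.snoc I istar) (Fin.snoc J jstar)) := by
  set B := M.submatrix I J with hB
  have hdet : IsUnit B.det := (Matrix.isUnit_iff_isUnit_det B).1 hinv
  haveI : Invertible B := hinv.invertible
  set u : Matrix (Fin r) (Fin 1) ℝ := fun a _ => M (I a) jstar with hu
  set v : Matrix (Fin 1) (Fin r) ℝ := fun _ b => M istar (J b) with hv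
  set d : Matrix (Fin 1) (Fin 1) ℝ := fun _ _ => M istar jstar with hd
  set N := M.submatrix (Fin.snoc I istar) (Fin.snoc J jstar) with hN
  have hl : ∀ (k : ℕ) (K : Fin r → Fin k) (x : Fin k) (a : Fin r),
      (Fin.snoc K x : Fin (r+1) → Fin k) (finSumFinEquiv (Sum.inl a)) = K a := by
    intro k K x a
    rw [finSumFinEquiv_apply_left, show (Fin.castAdd 1 a) = Fin.castSucc a from rfl,
      Fin.snoc_castSucc]
  have hr : ∀ (k : ℕ) (K : Fin r → Fin k) (x : Fin k) (a : Fin 1),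
      (Fin.snoc K x : Fin (r+1) → Fin k) (finSumFinEquiv (Sum.inr a)) = x := by
    intro k K x a
    rw [finSumFinEquiv_apply_right, Subsingleton.elim a 0,
      show (Fin.natAdd r (0 : Fin 1)) = Fin.last r from rfl, Fin.snoc_last]
  have hblock : N.submatrix finSumFinEquiv finSumFinEquiv = Matrix.fromBlocks B u v d := by
    ext i j
    cases i <;> cases j <;>
      simp only [Matrix.submatrix_apply, hN, hB, hu, hv, hd, hl, hr,
        Matrix.fromBlocks_apply₁₁, Matrix.fromBlocks_apply₁₂,
        Matrix.fromBlocks_apply₂₁, Matrix.fromBlocks_apply₂₂] <;> rfl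
  have hdetN : N.det = (Matrix.fromBlocks B u v d).det := by
    rw [← hblock, Matrix.det_submatrix_equiv_self]
  rw [Matrix.isUnit_iff_isUnit_det, hdetN, Matrix.det_fromBlocks₁₁]
  have hsch : (d - v * B⁻¹ * u).det
      = (M - M.submatrix id J * B⁻¹ * M.submatrix I id) istar jstar := by
    rw [Matrix.det_fin_one]
    simp [Matrix.sub_apply, Matrix.mul_apply, hd, hv, hu]
    rfl
  rw [Matrix.invOf_eq_nonsing_inv, hsch]
  exact hdet.mul (isUnit_iff_ne_zero.mpr hpivot)



/-- One ACA step: if `A = M − M(:,J)M(I,J)⁻¹M(I,:)` is the current residual with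
`M(I,J)` invertible and `A_{i*,j*} ≠ 0`, then after appending the pivot `(i*, j*)`
the enlarged pivot block `M(I',J')` is invertible and the new residual vanishes on
all rows in `I'` and all columns in `J'`. -/
theorem aca_step_correct (n m r : ℕ)
    (M : Matrix (Fin n) (Fin m) ℝ)
    (I : Fin r → Fin n) (J : Fin r → Fin m)
    (hI : Function.Injective I) (hJ : Function.Injective J)
    (hinv : IsUnit (M.submatrix I J))
    (istar : Fin n) (jstar : Fin m)
    (hpivot :
      (M - M.submatrix id J * (M.submatrix I J)⁻¹ * M.submatrix I id) istar jstar ≠ 0) :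
    IsUnit (M.submatrix (Fin.snoc I istar) (Fin.snoc J jstar)) ∧
    (∀ (a : Fin (r + 1)) (j : Fin m),
      (M - M.submatrix id (Fin.snoc J jstar) *
          (M.submatrix (Fin.snoc I istar) (Fin.snoc J jstar))⁻¹ *
          M.submatrix (Fin.snoc I istar) id) ((Fin.snoc I istar : Fin (r+1) → Fin n) a) j = 0) ∧
    (∀ (i : Fin n) (b : Fin (r + 1)),
      (M - M.submatrix id (Fin.snoc J jstar) *
          (M.submatrix (Fin.snoc I istar) (Fin.snoc J jstar))⁻¹ *
          M.submatrix (Fin.snoc I istar) id) i ((Fin.snoc J jstar : Fin (r+1) → Fin m) b) = 0) := by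
  have hN := enlarged_isUnit M I J hinv istar jstar hpivot
  obtain ⟨h2, h3⟩ := residual_vanishes M (Fin.snoc I istar) (Fin.snoc J jstar) hN
  exact ⟨hN, h2, h3⟩
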